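/- The number of orbits on P^1(F) of the group G_e(k) = {[[1+ϖ^k a, ϖ^k b],[ϖ^{k-1} c, 1+ϖ^k d]] : a,b,c,d ∈ O} acting by right Möbius transformations equals 2q^{k−1}: the orbits on {|z| ≤ 1} are the q^{k−1} discs of radius |ϖ|^{k−1}, and the orbits on {|1/w| ≤ |ϖ|} are the q^{k−1} discs of radius |ϖ|^k in the coordinate 1/w. -/

import Mathlib

open Matrix Pointwise
open scoped OnePoint

noncomputable section

/-- `ϖ` is a uniformizer of the nonarchimedean field `F`. -/
def IsUniformizer (F : Type*) [NormedField F] (ϖ : F) : Prop :=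
  ϖ ≠ 0 ∧ ‖ϖ‖ < 1 ∧ ∀ x : F, ‖x‖ < 1 → ‖x‖ ≤ ‖ϖ‖

/-- The principal congruence subgroup `G_{v₀}(k)` of level `k`: matrices in `GL₂(𝒪)`
congruent to the identity modulo `ϖ^k` (entrywise, each entry of `g - 1` lies in `ϖ^k 𝒪`,
i.e. has norm at most `‖ϖ‖^k`). -/
def Gv0 (F : Type*) [NormedField F] (ϖ : F) (k : ℕ) : Set (GL (Fin 2) F) :=
  {g | ‖(g : Matrix (Fin 2) (Fin 2) F) 0 0 - 1‖ ≤ ‖ϖ‖ ^ k ∧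
       ‖(g : Matrix (Fin 2) (Fin 2) F) 0 1‖ ≤ ‖ϖ‖ ^ k ∧
       ‖(g : Matrix (Fin 2) (Fin 2) F) 1 0‖ ≤ ‖ϖ‖ ^ k ∧
       ‖(g : Matrix (Fin 2) (Fin 2) F) 1 1 - 1‖ ≤ ‖ϖ‖ ^ k}

/-- The diagonal matrix `diag(ϖ, 1)` as an element of `GL₂(F)`. -/
def dmat (F : Type*) [Field F] (ϖ : F) (h : ϖ ≠ 0) : GL (Fin 2) F :=
  Matrix.GeneralLinearGroup.mkOfDetNeZero !![ϖ, 0; 0, 1]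
    (by simpa [Matrix.det_fin_two_of] using h)

/-- `G_{v₁}(k) = diag(ϖ,1) · G_{v₀}(k) · diag(ϖ,1)⁻¹`. -/
def Gv1 (F : Type*) [NormedField F] (ϖ : F) (h : ϖ ≠ 0) (k : ℕ) : Set (GL (Fin 2) F) :=
  (fun g => dmat F ϖ h * g * (dmat F ϖ h)⁻¹) '' Gv0 F ϖ k

/-- The explicit set `H` of matrices `[[1+ϖ^k a, ϖ^k b],[ϖ^{k-1} c, 1+ϖ^k d]]`, `a,b,c,d ∈ 𝒪`;
this is the edge group `G_e(k)`. -/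
def Ge (F : Type*) [NormedField F] (ϖ : F) (k : ℕ) : Set (GL (Fin 2) F) :=
  {g | ‖(g : Matrix (Fin 2) (Fin 2) F) 0 0 - 1‖ ≤ ‖ϖ‖ ^ k ∧
       ‖(g : Matrix (Fin 2) (Fin 2) F) 0 1‖ ≤ ‖ϖ‖ ^ k ∧
       ‖(g : Matrix (Fin 2) (Fin 2) F) 1 0‖ ≤ ‖ϖ‖ ^ (k - 1) ∧
       ‖(g : Matrix (Fin 2) (Fin 2) F) 1 1 - 1‖ ≤ ‖ϖ‖ ^ k}

/-- The explicit description of `G_{v₁}(k)`: matrices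
`[[1+ϖ^k a, ϖ^{k+1} b],[ϖ^{k-1} c, 1+ϖ^k d]]` with `a,b,c,d ∈ 𝒪`. -/
def Gv1ex (F : Type*) [NormedField F] (ϖ : F) (k : ℕ) : Set (GL (Fin 2) F) :=
  {g | ‖(g : Matrix (Fin 2) (Fin 2) F) 0 0 - 1‖ ≤ ‖ϖ‖ ^ k ∧
       ‖(g : Matrix (Fin 2) (Fin 2) F) 0 1‖ ≤ ‖ϖ‖ ^ (k + 1) ∧
       ‖(g : Matrix (Fin 2) (Fin 2) F) 1 0‖ ≤ ‖ϖ‖ ^ (k - 1) ∧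
       ‖(g : Matrix (Fin 2) (Fin 2) F) 1 1 - 1‖ ≤ ‖ϖ‖ ^ k}

open scoped Classical in
/-- The right Möbius action of `g = [[a,b],[c,d]]` on `ℙ¹(F) = F ∪ {∞}` (here modelled as
`Option F`, with `none = ∞`): `z·g = (az+c)/(bz+d)`, `∞·g = a/b`, with value `∞` when the
denominator vanishes. -/
def moeb (F : Type*) [Field F] (g : Matrix (Fin 2) (Fin 2) F) : Option F → Option F
  | Option.some z => if g 0 1 * z + g 1 1 = 0 then Option.none
      else Option.some ((g 0 0 * z + g 1 0) / (g 0 1 * z + g 1 1))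
  | Option.none => if g 0 1 = 0 then Option.none else Option.some (g 0 0 / g 0 1)

/-- The orbit of `z ∈ ℙ¹(F)` under a set `S` of elements of `GL₂(F)` acting on the right by
Möbius transformations. -/
def orb (F : Type*) [Field F] (S : Set (GL (Fin 2) F)) (z : Option F) : Set (Option F) :=
  {w | ∃ g ∈ S, moeb F (g : Matrix (Fin 2) (Fin 2) F) z = w}

/-- `D` is an orbit of `S` on `ℙ¹(F)`. -/
def IsOrbit (F : Type*) [Field F] (S : Set (GL (Fin 2) F)) (D : Set (Option F)) : Prop :=
  ∃ z, D = orb F S z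

/-- The region `B_w(∞, |ϖ|) = {w ∈ ℙ¹(F) : |1/w| ≤ |ϖ|} = {|w| ≥ |ϖ|⁻¹} ∪ {∞}`. -/
def regionInfty (F : Type*) [NormedField F] (ϖ : F) : Set (Option F) :=
  {w | w = Option.none ∨ ∃ z : F, w = Option.some z ∧ ‖ϖ‖⁻¹ ≤ ‖z‖}

/-- The coordinate `1/w` on `ℙ¹(F)`, with `1/∞ = 0`. -/
def invc (F : Type*) [Field F] : Option F → F
  | Option.none => 0
  | Option.some z => z⁻¹

/-- The residue field of `F` has cardinality `q`: there are exactly `q` classes in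
`𝒪/(ϖ)`, witnessed by a set of representatives. -/
def ResidueCard (F : Type*) [NormedField F] (ϖ : F) (q : ℕ) : Prop :=
  ∃ s : Finset F, s.card = q ∧ (∀ x ∈ s, ‖x‖ ≤ 1) ∧
    ∀ x : F, ‖x‖ ≤ 1 → ∃! y, y ∈ s ∧ ‖x - y‖ ≤ ‖ϖ‖

/-- The conjugate `h S h⁻¹` of a set of matrices. -/
def conjSet (F : Type*) [Field F] (h : GL (Fin 2) F) (S : Set (GL (Fin 2) F)) :
    Set (GL (Fin 2) F) :=
  (fun g => h * g * h⁻¹) '' S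

/-- The matrix `g_α = [[1,0],[α,ϖ]]` as an element of `GL₂(F)`. -/
def galpha (F : Type*) [Field F] (ϖ α : F) (h : ϖ ≠ 0) : GL (Fin 2) F :=
  Matrix.GeneralLinearGroup.mkOfDetNeZero !![1, 0; α, ϖ]
    (by simpa [Matrix.det_fin_two_of] using h)

/-- The diagonal matrix `diag(1, ϖ^n)` as an element of `GL₂(F)`. -/
def dmatN (F : Type*) [Field F] (ϖ : F) (h : ϖ ≠ 0) (n : ℕ) : GL (Fin 2) F :=
  Matrix.GeneralLinearGroup.mkOfDetNeZero !![1, 0; 0, ϖ ^ n]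
    (by simpa [Matrix.det_fin_two_of] using pow_ne_zero n h)

open IsUltrametricDist

section Aux
variable {F : Type*} [NormedField F] [IsUltrametricDist F] {ϖ : F} {k : ℕ}

omit [IsUltrametricDist F] in
lemma IsUnif.pos (h : ϖ ≠ 0) : 0 < ‖ϖ‖ := norm_pos_iff.2 h

lemma norm_add2 {x y : F} {r : ℝ} (hx : ‖x‖ ≤ r) (hy : ‖y‖ ≤ r) : ‖x + y‖ ≤ r :=
  (norm_add_le_max x y).trans (max_le hx hy)

lemma norm_add4 {a b c d : F} {r : ℝ} (ha : ‖a‖ ≤ r) (hb : ‖b‖ ≤ r) (hc : ‖c‖ ≤ r)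
    (hd : ‖d‖ ≤ r) : ‖a + b + c + d‖ ≤ r :=
  norm_add2 (norm_add2 (norm_add2 ha hb) hc) hd

lemma norm_add_eq_left {x y : F} (h : ‖y‖ < ‖x‖) : ‖x + y‖ = ‖x‖ := by
  refine le_antisymm ((norm_add_le_max x y).trans (max_le le_rfl h.le)) ?_
  by_contra hlt
  push_neg at hlt
  have : ‖x‖ ≤ max ‖x + y‖ ‖y‖ := by
    simpa using norm_add_le_max (x + y) (-y)
  rcases max_cases ‖x + y‖ ‖y‖ with ⟨he, _⟩ | ⟨he, _⟩ <;> rw [he] at this <;> linarith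

lemma norm_eq_one_of_sub_lt {x : F} (h : ‖x - 1‖ < 1) : ‖x‖ = 1 := by
  have h1 : ‖(1:F)‖ = 1 := norm_one
  have := norm_add_eq_left (x := (1:F)) (y := x - 1) (by rw [h1]; exact h)
  simpa [h1] using this

omit [IsUltrametricDist F] in
lemma norm_mul_le_of {x y : F} {r : ℝ} (hx : ‖x‖ ≤ r) (hy : ‖y‖ ≤ 1) (hr : 0 ≤ r) :
    ‖x * y‖ ≤ r := by
  rw [norm_mul]
  calc ‖x‖ * ‖y‖ ≤ r * 1 := mul_le_mul hx hy (norm_nonneg _) hr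
  _ = r := mul_one r

end Aux

section Mats
variable {F : Type*} [NormedField F] [IsUltrametricDist F] {ϖ : F} {k : ℕ}

def lmat (F : Type*) [Field F] (c : F) : GL (Fin 2) F :=
  Matrix.GeneralLinearGroup.mkOfDetNeZero !![1, 0; c, 1] (by simp [Matrix.det_fin_two_of])

def umat (F : Type*) [Field F] (b : F) : GL (Fin 2) F :=
  Matrix.GeneralLinearGroup.mkOfDetNeZero !![1, b; 0, 1] (by simp [Matrix.det_fin_two_of])

omit [IsUltrametricDist F] in
lemma lmat_coe (c : F) : ((lmat F c) : Matrix (Fin 2) (Fin 2) F) = !![1, 0; c, 1] := rfl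

omit [IsUltrametricDist F] in
lemma umat_coe (b : F) : ((umat F b) : Matrix (Fin 2) (Fin 2) F) = !![1, b; 0, 1] := rfl

omit [IsUltrametricDist F] in
lemma lmat_mem (h0 : ϖ ≠ 0) {c : F} (hc : ‖c‖ ≤ ‖ϖ‖ ^ (k - 1)) : lmat F c ∈ Ge F ϖ k := by
  have hp := IsUnif.pos h0
  refine ⟨?_, ?_, ?_, ?_⟩ <;> rw [lmat_coe] <;> simp [hc] <;> positivity

omit [IsUltrametricDist F] in
lemma umat_mem (h0 : ϖ ≠ 0) (hk : 1 ≤ k) {b : F} (hb : ‖b‖ ≤ ‖ϖ‖ ^ k) :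
    umat F b ∈ Ge F ϖ k := by
  have hp := IsUnif.pos h0
  refine ⟨?_, ?_, ?_, ?_⟩ <;> rw [umat_coe] <;> simp [hb] <;> positivity

omit [IsUltrametricDist F] in
lemma moeb_lmat (c z : F) :
    moeb F ((lmat F c) : Matrix (Fin 2) (Fin 2) F) (Option.some z) = Option.some (z + c) := by
  rw [lmat_coe]
  simp [moeb, add_comm]

end Mats

section OrbBall
variable {F : Type*} [NormedField F] [IsUltrametricDist F] {ϖ : F} {k : ℕ}

lemma orb_ball (hu : IsUniformizer F ϖ) (hk : 1 ≤ k) (z₀ : F) (hz₀ : ‖z₀‖ ≤ 1) :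
    orb F (Ge F ϖ k) (Option.some z₀) =
      Option.some '' {z : F | ‖z - z₀‖ ≤ ‖ϖ‖ ^ (k - 1)} := by
  obtain ⟨h0, hp1, hmx⟩ := hu
  have hp := IsUnif.pos h0
  have hk1 : ‖ϖ‖ ^ k < 1 := pow_lt_one₀ hp.le hp1 (by omega)
  have hkk : ‖ϖ‖ ^ k ≤ ‖ϖ‖ ^ (k - 1) := pow_le_pow_of_le_one hp.le hp1.le (Nat.sub_le k 1)
  ext w
  constructor
  · rintro ⟨g, ⟨ha, hb, hc, hd⟩, rfl⟩
    set A := ((g : GL (Fin 2) F) : Matrix (Fin 2) (Fin 2) F) with hA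
    have hD1 : ‖A 0 1 * z₀ + A 1 1 - 1‖ ≤ ‖ϖ‖ ^ k := by
      have he : A 0 1 * z₀ + A 1 1 - 1 = A 0 1 * z₀ + (A 1 1 - 1) := by ring
      rw [he]
      exact norm_add2 (norm_mul_le_of hb hz₀ (by positivity)) hd
    have hDnorm : ‖A 0 1 * z₀ + A 1 1‖ = 1 := norm_eq_one_of_sub_lt (lt_of_le_of_lt hD1 hk1)
    have hD0 : A 0 1 * z₀ + A 1 1 ≠ 0 := by
      intro h; rw [h, norm_zero] at hDnorm; exact one_ne_zero hDnorm.symm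
    have hmv : moeb F A (Option.some z₀) =
        Option.some ((A 0 0 * z₀ + A 1 0) / (A 0 1 * z₀ + A 1 1)) := by
      simp only [moeb]; rw [if_neg hD0]
    rw [hmv]
    refine ⟨(A 0 0 * z₀ + A 1 0) / (A 0 1 * z₀ + A 1 1), ?_, rfl⟩
    show ‖(A 0 0 * z₀ + A 1 0) / (A 0 1 * z₀ + A 1 1) - z₀‖ ≤ ‖ϖ‖ ^ (k - 1)
    have key : (A 0 0 * z₀ + A 1 0) / (A 0 1 * z₀ + A 1 1) - z₀
        = ((A 0 0 - 1) * z₀ + A 1 0 + (-(A 0 1 * z₀ * z₀)) + (-((A 1 1 - 1) * z₀))) /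
          (A 0 1 * z₀ + A 1 1) := by
      linear_combination z₀ * mul_inv_cancel₀ hD0
    rw [key, norm_div, hDnorm, div_one]
    refine norm_add4 ?_ hc ?_ ?_
    · exact (norm_mul_le_of ha hz₀ (by positivity)).trans hkk
    · rw [norm_neg]
      exact (norm_mul_le_of (norm_mul_le_of hb hz₀ (by positivity)) hz₀ (by positivity)).trans hkk
    · rw [norm_neg]
      exact (norm_mul_le_of hd hz₀ (by positivity)).trans hkk
  · rintro ⟨z, hz, rfl⟩
    refine ⟨lmat F (z - z₀), lmat_mem h0 hz, ?_⟩
    rw [moeb_lmat]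
    congr 1
    ring

end OrbBall

section OrbInf
variable {F : Type*} [NormedField F] [IsUltrametricDist F] {ϖ : F} {k : ℕ}

lemma orb_inf (hu : IsUniformizer F ϖ) (hk : 1 ≤ k) (w₀ : Option F)
    (hw₀ : w₀ ∈ regionInfty F ϖ) :
    orb F (Ge F ϖ k) w₀ =
      {w | w ∈ regionInfty F ϖ ∧ ‖invc F w - invc F w₀‖ ≤ ‖ϖ‖ ^ k} := by
  obtain ⟨h0, hp1, hmx⟩ := hu
  have hp := IsUnif.pos h0
  have hk1 : ‖ϖ‖ ^ k < 1 := pow_lt_one₀ hp.le hp1 (by omega)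
  have hpk_le : ‖ϖ‖ ^ k ≤ ‖ϖ‖ := by
    calc ‖ϖ‖ ^ k ≤ ‖ϖ‖ ^ 1 := pow_le_pow_of_le_one hp.le hp1.le hk
    _ = ‖ϖ‖ := pow_one _
  have hkk : ‖ϖ‖ ^ k ≤ ‖ϖ‖ ^ (k - 1) := pow_le_pow_of_le_one hp.le hp1.le (Nat.sub_le k 1)
  have hk1le : ‖ϖ‖ ^ (k - 1) ≤ 1 := pow_le_one₀ hp.le hp1.le
  have hinv1 : 1 < ‖ϖ‖⁻¹ := one_lt_inv_iff₀.2 ⟨hp, hp1⟩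
  ext w
  constructor
  · rintro ⟨g, ⟨ha, hb, hc, hd⟩, rfl⟩
    set A := ((g : GL (Fin 2) F) : Matrix (Fin 2) (Fin 2) F) with hA
    have hanorm : ‖A 0 0‖ = 1 := norm_eq_one_of_sub_lt (lt_of_le_of_lt ha hk1)
    have hdnorm : ‖A 1 1‖ = 1 := norm_eq_one_of_sub_lt (lt_of_le_of_lt hd hk1)
    have ha0 : A 0 0 ≠ 0 := by
      intro h; rw [h, norm_zero] at hanorm; exact one_ne_zero hanorm.symm
    rcases hw₀ with h | ⟨z₀, h, hz₀⟩ <;> subst h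
    · -- w₀ = ∞
      by_cases hb0 : A 0 1 = 0
      · have : moeb F A Option.none = Option.none := by simp [moeb, hb0]
        rw [this]
        exact ⟨Or.inl rfl, by simp [invc]⟩
      · have hmv : moeb F A Option.none = Option.some (A 0 0 / A 0 1) := by
          simp [moeb, hb0]
        rw [hmv]
        have hval : ‖A 0 0 / A 0 1‖ = ‖A 0 1‖⁻¹ := by
          rw [norm_div, hanorm, one_div]
        constructor
        · refine Or.inr ⟨_, rfl, ?_⟩
          rw [hval]
          exact inv_anti₀ (norm_pos_iff.2 hb0) (hb.trans hpk_le)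
        · show ‖(A 0 0 / A 0 1)⁻¹ - (0:F)‖ ≤ ‖ϖ‖ ^ k
          rw [sub_zero, norm_inv, hval, inv_inv]
          exact hb
    · -- w₀ = some z₀
      have hz0pos : 0 < ‖z₀‖ := lt_of_lt_of_le (inv_pos.2 hp) hz₀
      have hz0ne : z₀ ≠ 0 := norm_pos_iff.1 hz0pos
      have hz0inv : ‖z₀⁻¹‖ ≤ ‖ϖ‖ := by
        rw [norm_inv]
        calc ‖z₀‖⁻¹ ≤ (‖ϖ‖⁻¹)⁻¹ := inv_anti₀ (inv_pos.2 hp) hz₀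
        _ = ‖ϖ‖ := inv_inv _
      have hz0ge1 : 1 ≤ ‖z₀‖ := le_trans hinv1.le hz₀
      by_cases hD : A 0 1 * z₀ + A 1 1 = 0
      · have hmv : moeb F A (Option.some z₀) = Option.none := by
          simp only [moeb]; rw [if_pos hD]
        rw [hmv]
        refine ⟨Or.inl rfl, ?_⟩
        show ‖(0:F) - z₀⁻¹‖ ≤ ‖ϖ‖ ^ k
        have hbz : ‖A 0 1‖ * ‖z₀‖ = 1 := by
          have : A 0 1 * z₀ = -(A 1 1) := by linear_combination hD
          rw [← norm_mul, this, norm_neg, hdnorm]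
        have hinveq : ‖z₀‖⁻¹ = ‖A 0 1‖ := inv_eq_of_mul_eq_one_left hbz
        rw [zero_sub, norm_neg, norm_inv, hinveq]; exact hb
      · set N := A 0 0 * z₀ + A 1 0 with hN
        set D := A 0 1 * z₀ + A 1 1 with hDdef
        have hc_lt : ‖A 1 0‖ < ‖A 0 0 * z₀‖ := by
          rw [norm_mul, hanorm, one_mul]
          calc ‖A 1 0‖ ≤ ‖ϖ‖ ^ (k-1) := hc
          _ ≤ 1 := hk1le
          _ < ‖ϖ‖⁻¹ := by linarith
          _ ≤ ‖z₀‖ := hz₀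
        have hNnorm : ‖N‖ = ‖z₀‖ := by
          rw [hN, norm_add_eq_left hc_lt, norm_mul, hanorm, one_mul]
        have hN0 : N ≠ 0 := by
          intro h; rw [h, norm_zero] at hNnorm; exact hz0pos.ne hNnorm
        have hmv : moeb F A (Option.some z₀) = Option.some (N / D) := by
          simp only [moeb]; rw [if_neg hD]
        rw [hmv]
        have hdiff : ‖(N / D)⁻¹ - z₀⁻¹‖ ≤ ‖ϖ‖ ^ k := by
          have key : (N / D)⁻¹ - z₀⁻¹ =
              (A 0 1 * z₀ * z₀ + (A 1 1 - 1) * z₀ + (-((A 0 0 - 1) * z₀)) + (-(A 1 0))) /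
              (N * z₀) := by
            rw [hN, hDdef, inv_div, div_mul_eq_div_div]
            linear_combination (-((A 0 1 * z₀ + A 1 1) * (A 0 0 * z₀ + A 1 0)⁻¹)) * mul_inv_cancel₀ hz0ne + z₀⁻¹ * mul_inv_cancel₀ (show A 0 0 * z₀ + A 1 0 ≠ 0 from hN0)
          rw [key, norm_div, norm_mul, hNnorm]
          rw [div_le_iff₀ (by positivity)]
          have hnz2 : (0:ℝ) ≤ ‖ϖ‖ ^ k * (‖z₀‖ * ‖z₀‖) := by positivity
          refine norm_add4 ?_ ?_ ?_ ?_
          · rw [norm_mul, norm_mul]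
            have := mul_le_mul_of_nonneg_right (mul_le_mul_of_nonneg_right hb (norm_nonneg z₀)) (norm_nonneg z₀)
            calc ‖A 0 1‖ * ‖z₀‖ * ‖z₀‖ ≤ ‖ϖ‖ ^ k * ‖z₀‖ * ‖z₀‖ := this
            _ = ‖ϖ‖ ^ k * (‖z₀‖ * ‖z₀‖) := by ring
          · rw [norm_mul]
            have h1 : ‖A 1 1 - 1‖ * ‖z₀‖ ≤ ‖ϖ‖ ^ k * ‖z₀‖ :=
              mul_le_mul_of_nonneg_right hd (norm_nonneg z₀)
            nlinarith [pow_pos hp k]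
          · rw [norm_neg, norm_mul]
            have h1 : ‖A 0 0 - 1‖ * ‖z₀‖ ≤ ‖ϖ‖ ^ k * ‖z₀‖ :=
              mul_le_mul_of_nonneg_right ha (norm_nonneg z₀)
            nlinarith [pow_pos hp k]
          · rw [norm_neg]
            have h1 : ‖ϖ‖ ^ (k-1) * ‖ϖ‖ = ‖ϖ‖ ^ k := by
              rw [← pow_succ, Nat.sub_add_cancel hk]
            have h2 : 1 ≤ ‖ϖ‖ * ‖z₀‖ := by
              calc (1:ℝ) = ‖ϖ‖ * ‖ϖ‖⁻¹ := by field_simp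
              _ ≤ ‖ϖ‖ * ‖z₀‖ := mul_le_mul_of_nonneg_left hz₀ hp.le
            calc ‖A 1 0‖ ≤ ‖ϖ‖ ^ (k-1) := hc
            _ = ‖ϖ‖ ^ (k-1) * 1 := (mul_one _).symm
            _ ≤ ‖ϖ‖ ^ (k-1) * (‖ϖ‖ * ‖z₀‖) := by nlinarith [pow_pos hp (k-1)]
            _ = ‖ϖ‖ ^ k * ‖z₀‖ := by rw [← h1]; ring
            _ ≤ ‖ϖ‖ ^ k * (‖z₀‖ * ‖z₀‖) := by nlinarith [pow_pos hp k, hz0ge1, hz0pos]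
        refine ⟨?_, hdiff⟩
        have hvle : ‖(N / D)⁻¹‖ ≤ ‖ϖ‖ := by
          have : (N / D)⁻¹ = ((N / D)⁻¹ - z₀⁻¹) + z₀⁻¹ := by ring
          rw [this]
          exact norm_add2 (hdiff.trans hpk_le) hz0inv
        refine Or.inr ⟨_, rfl, ?_⟩
        have hND0 : N / D ≠ 0 := div_ne_zero hN0 hD
        have : ‖N / D‖⁻¹ ≤ ‖ϖ‖ := by rw [← norm_inv]; exact hvle
        calc ‖ϖ‖⁻¹ ≤ (‖N / D‖⁻¹)⁻¹ := inv_anti₀ (inv_pos.2 (norm_pos_iff.2 hND0)) this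
        _ = ‖N / D‖ := inv_inv _
  · rintro ⟨hwreg, hwd⟩
    refine ⟨umat F (invc F w - invc F w₀), umat_mem h0 hk hwd, ?_⟩
    rw [umat_coe]
    rcases hw₀ with h | ⟨z₀, h, hz₀⟩ <;> subst h <;>
      rcases hwreg with h | ⟨z, h, hz⟩ <;> subst h
    · simp [moeb, invc]
    · have hzne : z ≠ 0 := norm_pos_iff.1 (lt_of_lt_of_le (inv_pos.2 hp) hz)
      have : invc F (Option.some z) - invc F Option.none = z⁻¹ := by simp [invc]
      rw [this]
      simp [moeb, inv_ne_zero hzne, inv_inv]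
    · have hz0ne : z₀ ≠ 0 := norm_pos_iff.1 (lt_of_lt_of_le (inv_pos.2 hp) hz₀)
      have : invc F (Option.none : Option F) - invc F (Option.some z₀) = -z₀⁻¹ := by
        simp [invc]
      rw [this]
      have hden : !![1, -z₀⁻¹; 0, 1] 0 1 * z₀ + !![1, -z₀⁻¹; 0, 1] 1 1 = 0 := by
        simp
        field_simp
        ring
      simp only [moeb]
      rw [if_pos hden]
    · have hzne : z ≠ 0 := norm_pos_iff.1 (lt_of_lt_of_le (inv_pos.2 hp) hz)
      have hz0ne : z₀ ≠ 0 := norm_pos_iff.1 (lt_of_lt_of_le (inv_pos.2 hp) hz₀)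
      have hbv : invc F (Option.some z) - invc F (Option.some z₀) = z⁻¹ - z₀⁻¹ := by
        simp [invc]
      rw [hbv]
      have hden : !![1, z⁻¹ - z₀⁻¹; 0, 1] 0 1 * z₀ + !![1, z⁻¹ - z₀⁻¹; 0, 1] 1 1 = z⁻¹ * z₀ := by
        have e01 : !![1, z⁻¹ - z₀⁻¹; 0, 1] 0 1 = z⁻¹ - z₀⁻¹ := rfl
        have e11 : !![1, z⁻¹ - z₀⁻¹; 0, 1] 1 1 = 1 := rfl
        rw [e01, e11, sub_mul, inv_mul_cancel₀ hz0ne]; ring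
      have hden0 : z⁻¹ * z₀ ≠ 0 := mul_ne_zero (inv_ne_zero hzne) hz0ne
      simp only [moeb]
      rw [hden, if_neg hden0]
      congr 1
      rw [show !![1, z⁻¹ - z₀⁻¹; 0, 1] 0 0 = 1 from rfl,
        show !![1, z⁻¹ - z₀⁻¹; 0, 1] 1 0 = 0 from rfl, one_mul, add_zero,
        div_eq_iff hden0, ← mul_assoc, mul_inv_cancel₀ hzne, one_mul]
end OrbInf

section Digits
variable {F : Type*} [NormedField F] [IsUltrametricDist F] {ϖ : F}

lemma gap_lemma (h0 : ϖ ≠ 0) (hmax : ∀ x : F, ‖x‖ < 1 → ‖x‖ ≤ ‖ϖ‖) {x : F} {n : ℕ}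
    (hx : ‖x‖ < ‖ϖ‖ ^ n) : ‖x‖ ≤ ‖ϖ‖ ^ (n + 1) := by
  have hp := IsUnif.pos h0
  have h1 : ‖x / ϖ ^ n‖ < 1 := by
    rw [norm_div, norm_pow, div_lt_one (pow_pos hp n)]; exact hx
  have := hmax _ h1
  rw [norm_div, norm_pow, div_le_iff₀ (pow_pos hp n)] at this
  calc ‖x‖ ≤ ‖ϖ‖ * ‖ϖ‖ ^ n := this
  _ = ‖ϖ‖ ^ (n + 1) := by ring

lemma mul_sum_pow (f : Fin n → F) :
    ϖ * ∑ i : Fin n, f i * ϖ ^ (i : ℕ) = ∑ i : Fin n, f i * ϖ ^ ((i : ℕ) + 1) := by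
  rw [Finset.mul_sum]; exact Finset.sum_congr rfl fun i _ => by ring

/-- digit expansion: existence -/
lemma digits_exist (h0 : ϖ ≠ 0) {s : Finset F}
    (hs2 : ∀ x : F, ‖x‖ ≤ 1 → ∃! y, y ∈ s ∧ ‖x - y‖ ≤ ‖ϖ‖) :
    ∀ (n : ℕ) (x : F), ‖x‖ ≤ 1 →
      ∃ f : Fin n → F, (∀ i, f i ∈ s) ∧ ‖x - ∑ i, f i * ϖ ^ (i : ℕ)‖ ≤ ‖ϖ‖ ^ n := by
  intro n
  induction n with
  | zero => intro x hx; exact ⟨fun i => i.elim0, fun i => i.elim0, by simpa using hx⟩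
  | succ n ih =>
    intro x hx
    obtain ⟨y, ⟨hy, hxy⟩, -⟩ := hs2 x hx
    have hp := IsUnif.pos h0
    have hx' : ‖(x - y) / ϖ‖ ≤ 1 := by
      rw [norm_div, div_le_one hp]; exact hxy
    obtain ⟨f, hf, hsum⟩ := ih ((x - y) / ϖ) hx'
    refine ⟨Fin.cons y f, ?_, ?_⟩
    · intro i
      refine Fin.cases (by simpa using hy) (fun j => by simpa using hf j) i
    · have h2 : ϖ * ((x - y) / ϖ) = x - y := by field_simp
      have key : x - (y * ϖ ^ (0 : ℕ) + ∑ i : Fin n, f i * ϖ ^ ((i : ℕ) + 1)) =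
          ϖ * ((x - y) / ϖ - ∑ i : Fin n, f i * ϖ ^ (i : ℕ)) := by
        rw [mul_sub, h2, mul_sum_pow]; ring
      rw [Fin.sum_univ_succ]
      simp only [Fin.cons_zero, Fin.cons_succ, Fin.val_succ, Fin.val_zero]
      rw [key, norm_mul, pow_succ']
      exact mul_le_mul_of_nonneg_left hsum hp.le

/-- digit expansion: uniqueness -/
lemma digits_unique (h0 : ϖ ≠ 0) (hp1 : ‖ϖ‖ < 1) {s : Finset F} (hs1 : ∀ x ∈ s, ‖x‖ ≤ 1)
    (hs2 : ∀ x : F, ‖x‖ ≤ 1 → ∃! y, y ∈ s ∧ ‖x - y‖ ≤ ‖ϖ‖) :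
    ∀ (n : ℕ) (f g : Fin n → F), (∀ i, f i ∈ s) → (∀ i, g i ∈ s) →
      ‖(∑ i, f i * ϖ ^ (i : ℕ)) - ∑ i, g i * ϖ ^ (i : ℕ)‖ ≤ ‖ϖ‖ ^ n → f = g := by
  have hp := IsUnif.pos h0
  intro n
  induction n with
  | zero => intro f g _ _ _; funext i; exact i.elim0
  | succ n ih =>
    intro f g hf hg hnorm
    set Sf := ∑ i : Fin n, f i.succ * ϖ ^ (i : ℕ) with hSf
    set Sg := ∑ i : Fin n, g i.succ * ϖ ^ (i : ℕ) with hSg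
    have hbound : ∀ (h : Fin (n+1) → F), (∀ i, h i ∈ s) →
        ‖∑ i : Fin n, h i.succ * ϖ ^ (i : ℕ)‖ ≤ 1 := by
      intro h hh
      refine norm_sum_le_of_forall_le_of_nonneg zero_le_one fun i _ => ?_
      rw [norm_mul, norm_pow]
      calc ‖h i.succ‖ * ‖ϖ‖ ^ (i:ℕ) ≤ 1 * 1 :=
        mul_le_mul (hs1 _ (hh i.succ)) (pow_le_one₀ hp.le hp1.le) (by positivity) zero_le_one
      _ = 1 := one_mul 1
    have hrw : (∑ i, f i * ϖ ^ (i : ℕ)) - ∑ i, g i * ϖ ^ (i : ℕ)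
        = (f 0 - g 0) + ϖ * (Sf - Sg) := by
      rw [Fin.sum_univ_succ, Fin.sum_univ_succ, mul_sub, hSf, hSg, mul_sum_pow, mul_sum_pow]
      simp only [Fin.val_succ, Fin.val_zero, pow_zero, mul_one]
      ring
    rw [hrw] at hnorm
    have hdiff : ‖f 0 - g 0‖ ≤ ‖ϖ‖ := by
      have h1 : f 0 - g 0 = ((f 0 - g 0) + ϖ * (Sf - Sg)) + (-(ϖ * (Sf - Sg))) := by ring
      rw [h1]
      refine norm_add2 (hnorm.trans ?_) ?_
      · exact pow_le_of_le_one hp.le hp1.le (Nat.succ_ne_zero n)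
      · rw [norm_neg, norm_mul]
        calc ‖ϖ‖ * ‖Sf - Sg‖ ≤ ‖ϖ‖ * 1 := by
              refine mul_le_mul_of_nonneg_left ?_ hp.le
              have : Sf - Sg = Sf + (-Sg) := by ring
              rw [this]
              exact norm_add2 (hbound f hf) (by rw [norm_neg]; exact hbound g hg)
        _ = ‖ϖ‖ := mul_one _
    have h00 : f 0 = g 0 := by
      obtain ⟨y, hy, huniq⟩ := hs2 (f 0) (hs1 _ (hf 0))
      have e1 : f 0 = y := huniq _ ⟨hf 0, by simp [hp.le]⟩
      have e2 : g 0 = y := huniq _ ⟨hg 0, hdiff⟩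
      rw [e1, e2]
    have htail : (fun i : Fin n => f i.succ) = (fun i : Fin n => g i.succ) := by
      refine ih _ _ (fun i => hf i.succ) (fun i => hg i.succ) ?_
      have hnorm2 : ‖ϖ * (Sf - Sg)‖ ≤ ‖ϖ‖ ^ (n + 1) := by
        rw [h00] at hnorm; simpa using hnorm
      rw [norm_mul, pow_succ'] at hnorm2
      exact le_of_mul_le_mul_left hnorm2 hp
    funext i
    refine Fin.cases h00 (fun j => ?_) i
    exact congrFun htail j
end Digits

section Count
variable {F : Type*} [NormedField F] [IsUltrametricDist F] {ϖ : F} {k : ℕ}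

lemma ballCongr {z₀ z₁ : F} {r : ℝ} (h : ‖z₀ - z₁‖ ≤ r) :
    {z : F | ‖z - z₀‖ ≤ r} = {z : F | ‖z - z₁‖ ≤ r} := by
  ext z; simp only [Set.mem_setOf_eq]
  constructor <;> intro hz
  · have e : z - z₁ = (z - z₀) + (z₀ - z₁) := by ring
    rw [e]; exact norm_add2 hz h
  · have e : z - z₀ = (z - z₁) + (-(z₀ - z₁)) := by ring
    rw [e]; exact norm_add2 hz (by rw [norm_neg]; exact h)

lemma regionCongr (ϖ : F) {u₀ u₁ : F} {r : ℝ} (h : ‖u₀ - u₁‖ ≤ r) :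
    {w | w ∈ regionInfty F ϖ ∧ ‖invc F w - u₀‖ ≤ r} =
    {w | w ∈ regionInfty F ϖ ∧ ‖invc F w - u₁‖ ≤ r} := by
  ext w; simp only [Set.mem_setOf_eq]
  constructor <;> rintro ⟨hw, hd⟩ <;> refine ⟨hw, ?_⟩
  · have e : invc F w - u₁ = (invc F w - u₀) + (u₀ - u₁) := by ring
    rw [e]; exact norm_add2 hd h
  · have e : invc F w - u₀ = (invc F w - u₁) + (-(u₀ - u₁)) := by ring
    rw [e]; exact norm_add2 hd (by rw [norm_neg]; exact h)
end Count

open scoped Classical in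
/-- the point of `ℙ¹` with `invc = u` lying in the region at infinity -/
def ptF (F : Type*) [Field F] (u : F) : Option F :=
  if u = 0 then Option.none else Option.some u⁻¹

section Pt
variable {F : Type*} [NormedField F] {ϖ : F}

lemma ptF_invc (u : F) : invc F (ptF F u) = u := by
  unfold ptF; split_ifs with h0
  · simp [invc, h0]
  · simp [invc]

lemma ptF_region {u : F} (h : ‖u‖ ≤ ‖ϖ‖) : ptF F u ∈ regionInfty F ϖ := by
  unfold ptF; split_ifs with h0
  · exact Or.inl rfl
  · exact Or.inr ⟨_, rfl, by rw [norm_inv]; exact inv_anti₀ (norm_pos_iff.2 h0) h⟩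

lemma dsum_le_one [IsUltrametricDist F] (hp1 : ‖ϖ‖ ≤ 1) {n : ℕ} (f : Fin n → F)
    (hf : ∀ i, ‖f i‖ ≤ 1) : ‖∑ i, f i * ϖ ^ (i : ℕ)‖ ≤ 1 := by
  refine IsUltrametricDist.norm_sum_le_of_forall_le_of_nonneg zero_le_one fun i _ => ?_
  rw [norm_mul, norm_pow]
  calc ‖f i‖ * ‖ϖ‖ ^ (i : ℕ) ≤ 1 * 1 :=
    mul_le_mul (hf i) (pow_le_one₀ (norm_nonneg _) hp1) (by positivity) zero_le_one
  _ = 1 := one_mul 1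
end Pt

theorem statement11 (p : ℕ) [Fact p.Prime] (F : Type*) [NontriviallyNormedField F]
    [IsUltrametricDist F] [NormedAlgebra ℚ_[p] F] [FiniteDimensional ℚ_[p] F]
    (ϖ : F) (hϖ : IsUniformizer F ϖ) (q : ℕ) (hq : ResidueCard F ϖ q)
    (k : ℕ) (hk : 1 ≤ k) :
    Nat.card {D : Set (Option F) // IsOrbit F (Ge F ϖ k) D} = 2 * q ^ (k - 1) ∧
    (∀ z₀ : F, ‖z₀‖ ≤ 1 →
      orb F (Ge F ϖ k) (Option.some z₀) =
        Option.some '' {z : F | ‖z - z₀‖ ≤ ‖ϖ‖ ^ (k - 1)}) ∧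
    (∀ w₀ ∈ regionInfty F ϖ,
      orb F (Ge F ϖ k) w₀ =
        {w | w ∈ regionInfty F ϖ ∧ ‖invc F w - invc F w₀‖ ≤ ‖ϖ‖ ^ k}) := by
  obtain ⟨s, hscard, hs1, hs2⟩ := hq
  obtain ⟨h0, hp1, hmx⟩ := id hϖ
  have hp := IsUnif.pos h0
  refine ⟨?_, fun z₀ hz₀ => orb_ball hϖ hk z₀ hz₀, fun w₀ hw₀ => orb_inf hϖ hk w₀ hw₀⟩
  have hkn : k - 1 + 1 = k := Nat.sub_add_cancel hk
  have hpk : ‖ϖ‖ ^ k = ‖ϖ‖ * ‖ϖ‖ ^ (k - 1) := by conv_lhs => rw [← hkn, pow_succ']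
  have hinv1 : 1 < ‖ϖ‖⁻¹ := one_lt_inv_iff₀.2 ⟨hp, hp1⟩
  set V : (Fin (k - 1) → {x // x ∈ s}) → F := fun f => ∑ i, ((f i : F)) * ϖ ^ (i : ℕ)
    with hV
  have hVle : ∀ f, ‖V f‖ ≤ 1 := fun f => dsum_le_one hp1.le _ (fun i => hs1 _ (f i).2)
  have hVu : ∀ f g : Fin (k - 1) → {x // x ∈ s}, ‖V f - V g‖ ≤ ‖ϖ‖ ^ (k - 1) → f = g := by
    intro f g hfg
    have := digits_unique h0 hp1 hs1 hs2 (k - 1) (fun i => (f i : F)) (fun i => (g i : F))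
      (fun i => (f i).2) (fun i => (g i).2) hfg
    funext i
    exact Subtype.ext (congrFun this i)
  have hVmul : ∀ f g : Fin (k - 1) → {x // x ∈ s}, ‖ϖ * V f - ϖ * V g‖ ≤ ‖ϖ‖ ^ k → f = g := by
    intro f g hfg
    refine hVu f g ?_
    have e : ϖ * V f - ϖ * V g = ϖ * (V f - V g) := by ring
    rw [e, norm_mul, hpk] at hfg
    exact le_of_mul_le_mul_left hfg hp
  have hϖVle : ∀ f, ‖ϖ * V f‖ ≤ ‖ϖ‖ := fun f => by
    rw [norm_mul]
    calc ‖ϖ‖ * ‖V f‖ ≤ ‖ϖ‖ * 1 := mul_le_mul_of_nonneg_left (hVle f) hp.le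
    _ = ‖ϖ‖ := mul_one _
  have descF : ∀ f, orb F (Ge F ϖ k) (Option.some (V f)) =
      Option.some '' {z : F | ‖z - V f‖ ≤ ‖ϖ‖ ^ (k - 1)} :=
    fun f => orb_ball hϖ hk _ (hVle f)
  have descT : ∀ f, orb F (Ge F ϖ k) (ptF F (ϖ * V f)) =
      {w | w ∈ regionInfty F ϖ ∧ ‖invc F w - ϖ * V f‖ ≤ ‖ϖ‖ ^ k} := fun f => by
    rw [orb_inf hϖ hk _ (ptF_region (hϖVle f)), ptF_invc]
  have hbij : Function.Bijective (fun p : Bool × (Fin (k - 1) → {x // x ∈ s}) =>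
      (⟨orb F (Ge F ϖ k) (if p.1 then ptF F (ϖ * V p.2) else Option.some (V p.2)),
        ⟨_, rfl⟩⟩ : {D : Set (Option F) // IsOrbit F (Ge F ϖ k) D})) := by
    constructor
    · rintro ⟨b1, f1⟩ ⟨b2, f2⟩ hEq
      simp only [Subtype.mk.injEq] at hEq
      cases b1 <;> cases b2 <;>
        simp only [if_true, if_false, Bool.false_eq_true, ite_false, ite_true] at hEq ⊢
      · -- false false
        rw [descF f1, descF f2] at hEq
        have hmem : Option.some (V f1) ∈
            Option.some '' {z : F | ‖z - V f1‖ ≤ ‖ϖ‖ ^ (k - 1)} :=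
          ⟨V f1, by simp [pow_nonneg hp.le], rfl⟩
        rw [hEq] at hmem
        obtain ⟨z, hz, hzz⟩ := hmem
        have hz' : z = V f1 := Option.some.inj hzz
        rw [hz'] at hz
        rw [hVu f1 f2 hz]
      · -- false true : contradiction
        rw [descF f1, descT f2] at hEq
        have hmem : Option.some (V f1) ∈
            Option.some '' {z : F | ‖z - V f1‖ ≤ ‖ϖ‖ ^ (k - 1)} :=
          ⟨V f1, by simp [pow_nonneg hp.le], rfl⟩
        rw [hEq] at hmem
        obtain ⟨hreg, -⟩ := hmem
        rcases hreg with h | ⟨z, hz, hzn⟩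
        · exact absurd h (by simp)
        · have : z = V f1 := (Option.some.inj hz).symm
          rw [this] at hzn
          have := hVle f1
          linarith
      · -- true false : contradiction
        rw [descT f1, descF f2] at hEq
        have hmem : Option.some (V f2) ∈
            Option.some '' {z : F | ‖z - V f2‖ ≤ ‖ϖ‖ ^ (k - 1)} :=
          ⟨V f2, by simp [pow_nonneg hp.le], rfl⟩
        rw [← hEq] at hmem
        obtain ⟨hreg, -⟩ := hmem
        rcases hreg with h | ⟨z, hz, hzn⟩
        · exact absurd h (by simp)
        · have : z = V f2 := (Option.some.inj hz).symm
          rw [this] at hzn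
          have := hVle f2
          linarith
      · -- true true
        rw [descT f1, descT f2] at hEq
        have hmem : ptF F (ϖ * V f1) ∈
            {w | w ∈ regionInfty F ϖ ∧ ‖invc F w - ϖ * V f1‖ ≤ ‖ϖ‖ ^ k} :=
          ⟨ptF_region (hϖVle f1), by rw [ptF_invc]; simp [pow_nonneg hp.le]⟩
        rw [hEq] at hmem
        obtain ⟨-, hd⟩ := hmem
        rw [ptF_invc] at hd
        rw [hVmul f1 f2 hd]
    · rintro ⟨D, z, rfl⟩
      cases z with
      | none =>
        obtain ⟨f, hfmem, hfcl⟩ := digits_exist h0 hs2 (k - 1) 0 (by simp)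
        refine ⟨(true, fun i => ⟨f i, hfmem i⟩), Subtype.ext ?_⟩
        show orb F (Ge F ϖ k)
          (if true then ptF F (ϖ * V fun i => ⟨f i, hfmem i⟩)
            else Option.some (V fun i => ⟨f i, hfmem i⟩)) = orb F (Ge F ϖ k) Option.none
        rw [if_pos rfl, descT _, orb_inf hϖ hk Option.none (Or.inl rfl)]
        have h1 : invc F (Option.none : Option F) = 0 := rfl
        rw [h1]
        apply regionCongr
        have hVeq : V (fun i => ⟨f i, hfmem i⟩) = ∑ i, f i * ϖ ^ (i : ℕ) := by rw [hV]
        have hfcl' : ‖V (fun i => ⟨f i, hfmem i⟩)‖ ≤ ‖ϖ‖ ^ (k - 1) := by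
          rw [hVeq]; simpa using hfcl
        rw [sub_zero, norm_mul, hpk]
        exact mul_le_mul_of_nonneg_left hfcl' hp.le
      | some z₀ =>
        rcases le_or_gt ‖z₀‖ 1 with hle | hgt
        · obtain ⟨f, hfmem, hfcl⟩ := digits_exist h0 hs2 (k - 1) z₀ hle
          refine ⟨(false, fun i => ⟨f i, hfmem i⟩), Subtype.ext ?_⟩
          show orb F (Ge F ϖ k)
            (if false then ptF F (ϖ * V fun i => ⟨f i, hfmem i⟩)
              else Option.some (V fun i => ⟨f i, hfmem i⟩)) = orb F (Ge F ϖ k) (Option.some z₀)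
          rw [if_neg (by simp), descF _, orb_ball hϖ hk z₀ hle]
          refine congrArg (Set.image Option.some) (ballCongr ?_)
          have hVeq : V (fun i => ⟨f i, hfmem i⟩) = ∑ i, f i * ϖ ^ (i : ℕ) := by rw [hV]
          rw [hVeq, norm_sub_rev]
          exact hfcl
        · have hz0 : z₀ ≠ 0 := by
            intro h; rw [h, norm_zero] at hgt; linarith
          have hzi1 : ‖z₀⁻¹‖ < 1 := by
            rw [norm_inv]; exact inv_lt_one_of_one_lt₀ hgt
          have hziπ : ‖z₀⁻¹‖ ≤ ‖ϖ‖ := hmx _ hzi1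
          have hreg : Option.some z₀ ∈ regionInfty F ϖ := by
            refine Or.inr ⟨z₀, rfl, ?_⟩
            have h1 : ‖z₀‖⁻¹ ≤ ‖ϖ‖ := by rw [← norm_inv]; exact hziπ
            calc ‖ϖ‖⁻¹ ≤ (‖z₀‖⁻¹)⁻¹ := inv_anti₀ (by positivity) h1
            _ = ‖z₀‖ := inv_inv _
          have hu1 : ‖z₀⁻¹ / ϖ‖ ≤ 1 := by
            rw [norm_div, div_le_one hp]; exact hziπ
          obtain ⟨f, hfmem, hfcl⟩ := digits_exist h0 hs2 (k - 1) (z₀⁻¹ / ϖ) hu1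
          refine ⟨(true, fun i => ⟨f i, hfmem i⟩), Subtype.ext ?_⟩
          show orb F (Ge F ϖ k)
            (if true then ptF F (ϖ * V fun i => ⟨f i, hfmem i⟩)
              else Option.some (V fun i => ⟨f i, hfmem i⟩)) = orb F (Ge F ϖ k) (Option.some z₀)
          rw [if_pos rfl, descT _, orb_inf hϖ hk _ hreg]
          have h2 : invc F (Option.some z₀) = z₀⁻¹ := rfl
          rw [h2]
          apply regionCongr
          have hVeq : V (fun i => ⟨f i, hfmem i⟩) = ∑ i, f i * ϖ ^ (i : ℕ) := by rw [hV]
          have e : ϖ * V (fun i => ⟨f i, hfmem i⟩) - z₀⁻¹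
              = ϖ * (V (fun i => ⟨f i, hfmem i⟩) - z₀⁻¹ / ϖ) := by
            field_simp
          rw [e, norm_mul, hpk]
          refine mul_le_mul_of_nonneg_left ?_ hp.le
          rw [hVeq, norm_sub_rev]
          exact hfcl
  rw [← Nat.card_eq_of_bijective _ hbij]
  simp [Nat.card_eq_fintype_card, Fintype.card_coe, hscard]
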